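/- If A is an integer m×n matrix with rank m whose m×m minors all have absolute value at most 2 (a bimodular matrix), and A contains a non-primitive column, then that column equals 2a for some integer vector a; moreover A contains at most one non-primitive column (up to sign). -/

import Mathlib

/-- `A` has differing columns: no column is zero and no two columns are equal
or negatives of each other. -/
def DiffCols {m n : ℕ} (A : Matrix (Fin m) (Fin n) ℤ) : Prop :=
  (∀ j, (fun i => A i j) ≠ 0) ∧
  ∀ j j' : Fin n, j ≠ j' →
    (fun i => A i j) ≠ (fun i => A i j') ∧ (fun i => A i j) ≠ (fun i => -A i j')

/-- `A` is `Δ`-modular: every `m × m` minor has absolute value at most `Δ`. -/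
def DMod {m n : ℕ} (A : Matrix (Fin m) (Fin n) ℤ) (Δ : ℤ) : Prop :=
  ∀ g : Fin m → Fin n, |(A.submatrix id g).det| ≤ Δ

/-- A primitive integer vector: the gcd of its entries is a unit. -/
def IsPrimitiveVec {m : ℕ} (v : Fin m → ℤ) : Prop :=
  ∀ d : ℤ, (∀ i, d ∣ v i) → IsUnit d


open Submodule Set Matrix

noncomputable def castLM (m : ℕ) : (Fin m → ℤ) →ₗ[ℤ] (Fin m → ℚ) where
  toFun v i := (v i : ℚ)
  map_add' u v := by funext i; simp
  map_smul' z v := by funext i; simp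

lemma castLM_inj (m : ℕ) : Function.Injective (castLM m) := by
  intro u v h
  funext i
  have := congrFun h i
  simpa [castLM] using this

lemma det_col_factor {m : ℕ} (M : Matrix (Fin m) (Fin m) ℤ) (k : Fin m) (d : ℤ)
    (h : ∀ i, d ∣ M i k) :
    ∃ N : Matrix (Fin m) (Fin m) ℤ, M.det = d * N.det ∧
      ∀ i k', k' ≠ k → N i k' = M i k' := by
  choose w hw using h
  refine ⟨M.updateCol k w, ?_, ?_⟩
  · conv_lhs => rw [← Matrix.updateCol_eq_self M k]
    have h2 : (fun i => M i k) = d • w := funext fun i => by rw [hw i]; rfl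
    rw [h2, Matrix.det_updateCol_smul]
  · intro i k' hk'
    rw [Matrix.updateCol_ne ?_]
    exact hk'

lemma spanQ_top {m n : ℕ} (A : Matrix (Fin m) (Fin n) ℤ)
    (hrank : A.rank = m) :
    span ℚ (Set.range (fun j => castLM m (A.transpose j))) = ⊤ := by
  rw [Matrix.rank, Matrix.range_mulVecLin] at hrank
  let P : Submodule ℤ (Fin m → ℤ) := span ℤ (Set.range Aᵀ)
  have hfin : Module.Finite ℤ P := Module.Finite.span_of_finite ℤ (Set.finite_range _)
  have hfr : Module.finrank ℤ P = m := hrank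
  let b : Module.Basis (Fin m) ℤ P := (Module.finBasis ℤ P).reindex (finCongr hfr)
  let v : Fin m → (Fin m → ℚ) := fun k => castLM m (b k : Fin m → ℤ)
  have hliZ : LinearIndependent ℤ v := by
    have h1 : LinearIndependent ℤ (fun k => ((b k : Fin m → ℤ))) :=
      b.linearIndependent.map' P.subtype P.ker_subtype
    exact h1.map' (castLM m) (LinearMap.ker_eq_bot.mpr (castLM_inj m))
  have hliQ : LinearIndependent ℚ v := (LinearIndependent.iff_fractionRing ℤ ℚ).mp hliZ
  have hsp : span ℚ (Set.range v) = ⊤ :=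
    hliQ.span_eq_top_of_card_eq_finrank' (by simp)
  have hsub : Set.range v ⊆ (span ℚ (Set.range (fun j => castLM m (Aᵀ j))) : Set (Fin m → ℚ)) := by
    rintro x ⟨k, rfl⟩
    have hb : (b k : Fin m → ℤ) ∈ P := (b k).2
    have : castLM m (b k : Fin m → ℤ) ∈ span ℤ ((castLM m) '' Set.range Aᵀ) := by
      rw [← Submodule.map_span]; exact Submodule.mem_map_of_mem hb
    have h2 : ((castLM m) '' Set.range Aᵀ) = Set.range (fun j => castLM m (Aᵀ j)) := by
      exact (Set.range_comp (castLM m) (Aᵀ : Fin n → Fin m → ℤ)).symm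
    rw [h2] at this
    exact Submodule.span_subset_span ℤ ℚ _ this
  have := Submodule.span_le.mpr hsub
  rw [hsp] at this
  exact top_unique this

lemma extraction {m n : ℕ} (A : Matrix (Fin m) (Fin n) ℤ)
    (htop : span ℚ (Set.range (fun j => castLM m (A.transpose j))) = ⊤)
    (hinj : Function.Injective (fun j => castLM m (A.transpose j)))
    (s : Set (Fin m → ℚ)) (hs : s ⊆ Set.range (fun j => castLM m (A.transpose j)))
    (hli : LinearIndependent ℚ ((↑) : s → (Fin m → ℚ))) :
    ∃ g : Fin m → Fin n, Function.Injective g ∧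
      (∀ x ∈ s, ∃ k, castLM m (A.transpose (g k)) = x) ∧
      (A.submatrix id g).det ≠ 0 := by
  classical
  set c : Fin n → (Fin m → ℚ) := fun j => castLM m (A.transpose j) with hc
  obtain ⟨b, hbt, hsb, htb, hlib0⟩ := exists_linearIndepOn_id_extension hli hs
  have hlib : LinearIndependent ℚ ((↑) : b → (Fin m → ℚ)) := hlib0
  have hspb : span ℚ b = ⊤ := by
    rw [← top_le_iff, ← htop]
    exact span_le.mpr htb
  have hspb' : ⊤ ≤ span ℚ (Set.range ((↑) : b → (Fin m → ℚ))) := by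
    rw [Subtype.range_coe]; exact hspb.ge
  let bas : Module.Basis b ℚ (Fin m → ℚ) := Module.Basis.mk hlib hspb'
  have : FiniteDimensional ℚ (Fin m → ℚ) := inferInstance
  have hft : Fintype b := FiniteDimensional.fintypeBasisIndex bas
  have hcard : Fintype.card b = m := by
    have := Module.finrank_eq_card_basis bas
    simp only [Module.finrank_fin_fun] at this
    omega
  let e : Fin m ≃ b := (Fintype.equivFinOfCardEq hcard).symm
  have hgex : ∀ k : Fin m, ∃ j : Fin n, c j = (e k : Fin m → ℚ) := fun k => hbt (e k).2
  choose g hg using hgex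
  have hginj : Function.Injective g := by
    intro k k' hkk'
    have : (e k : Fin m → ℚ) = (e k' : Fin m → ℚ) := by rw [← hg, ← hg, hkk']
    exact e.injective (Subtype.ext this)
  refine ⟨g, hginj, ?_, ?_⟩
  · intro x hx
    refine ⟨e.symm ⟨x, hsb hx⟩, ?_⟩
    show c (g (e.symm ⟨x, hsb hx⟩)) = x
    rw [hg, Equiv.apply_symm_apply]
  · have hM : ((A.submatrix id g).map (Int.cast : ℤ → ℚ)).det ≠ 0 := by
      have hcols : LinearIndependent ℚ
          (fun k => ((A.submatrix id g).map (Int.cast : ℤ → ℚ)).transpose k) := by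
        have h1 : (fun k => ((A.submatrix id g).map (Int.cast : ℤ → ℚ)).transpose k)
            = fun k => (e k : Fin m → ℚ) := by
          funext k
          rw [← hg k]
          funext i
          rfl
        rw [h1]
        exact hlib.comp e e.injective
      have := Matrix.linearIndependent_cols_iff_isUnit.mp hcols
      exact (Matrix.isUnit_iff_isUnit_det _).mp this |>.ne_zero
    intro h0
    apply hM
    have h2 := RingHom.map_det (Int.castRingHom ℚ) (A.submatrix id g)
    rw [h0] at h2
    simpa [Int.coe_castRingHom] using h2.symm


section Main
variable {m n : ℕ} (A : Matrix (Fin m) (Fin n) ℤ)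

/-- For any non-unit common divisor of a column that is non-zero, and given
an invertible minor containing that column, the divisor is ±2. -/
lemma divisor_pm_two
    (htop : span ℚ (Set.range (fun j => castLM m (A.transpose j))) = ⊤)
    (hinj : Function.Injective (fun j => castLM m (A.transpose j)))
    (hmod : ∀ g : Fin m → Fin n, |(A.submatrix id g).det| ≤ 2)
    (hnz : ∀ j, (fun i => A i j) ≠ 0)
    (j : Fin n) (d : ℤ) (hd : ∀ i, d ∣ A i j) (hdu : ¬ IsUnit d) :
    d = 2 ∨ d = -2 := by
  classical
  set c : Fin n → (Fin m → ℚ) := fun j => castLM m (A.transpose j) with hc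
  have hcj : c j ≠ 0 := by
    intro h0
    apply hnz j
    have : A.transpose j = 0 := castLM_inj m (by simpa [c, castLM, funext_iff] using h0)
    funext i
    exact congrFun this i
  obtain ⟨g, hginj, hcov, hdet⟩ := extraction A htop hinj {c j} (by
      rintro x rfl; exact ⟨j, rfl⟩) ((linearIndepOn_singleton_iff (R := ℚ) (v := (id : (Fin m → ℚ) → (Fin m → ℚ)))).mpr hcj)
  obtain ⟨k0, hk0⟩ := hcov (c j) rfl
  have hgk0 : g k0 = j := hinj hk0
  have hdvdD : d ∣ (A.submatrix id g).det := by
    obtain ⟨N, hN, -⟩ := det_col_factor (A.submatrix id g) k0 d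
      (fun i => by simpa [Matrix.submatrix, hgk0] using hd i)
    exact ⟨N.det, hN⟩
  have hdne : d ≠ 0 := by
    rintro rfl
    apply hnz j
    funext i
    simpa using hd i
  have h1 : |d| ≤ |(A.submatrix id g).det| :=
    Int.le_of_dvd (abs_pos.mpr hdet) ((abs_dvd _ _).mpr ((dvd_abs _ _).mpr hdvdD))
  have h2 : |d| ≤ 2 := le_trans h1 (hmod g)
  have h3 : ¬(d = 1 ∨ d = -1) := fun h => hdu (Int.isUnit_iff.mpr h)
  push_neg at h3
  rw [abs_le] at h2
  omega

theorem stmt0' (hrank : A.rank = m) (hmod : ∀ g : Fin m → Fin n, |(A.submatrix id g).det| ≤ 2)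
    (hnz : ∀ j, (fun i => A i j) ≠ 0)
    (hne : ∀ j j' : Fin n, j ≠ j' →
      (fun i => A i j) ≠ (fun i => A i j') ∧ (fun i => A i j) ≠ (fun i => -A i j')) :
    (∀ j : Fin n, ¬ IsPrimitiveVec (fun i => A i j) →
      ∃ a : Fin m → ℤ, (fun i => A i j) = fun i => 2 * a i) ∧
    (∀ j j' : Fin n, ¬ IsPrimitiveVec (fun i => A i j) →
      ¬ IsPrimitiveVec (fun i => A i j') →
      (fun i => A i j) = (fun i => A i j') ∨
        (fun i => A i j) = (fun i => -A i j')) := by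
  classical
  set c : Fin n → (Fin m → ℚ) := fun j => castLM m (A.transpose j) with hc
  have hcolinj : Function.Injective c := by
    intro j j' h
    by_contra hnej
    apply (hne j j' hnej).1
    have h2 := castLM_inj m h
    funext i; exact congrFun h2 i
  have htop := spanQ_top A hrank
  have key : ∀ j d, (∀ i, d ∣ A i j) → ¬ IsUnit d → d = 2 ∨ d = -2 :=
    fun j d hd hdu => divisor_pm_two A htop hcolinj hmod hnz j d hd hdu
  have part1 : ∀ j : Fin n, ¬ IsPrimitiveVec (fun i => A i j) → ∀ i, 2 ∣ A i j := by
    intro j hj i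
    rw [IsPrimitiveVec] at hj
    push_neg at hj
    obtain ⟨d, hd, hdu⟩ := hj
    rcases key j d hd hdu with h | h
    · exact h ▸ hd i
    · have h2 := hd i; rw [h] at h2; exact (neg_dvd).mp h2
  constructor
  · intro j hj
    exact ⟨fun i => A i j / 2, funext fun i => (Int.mul_ediv_cancel' (part1 j hj i)).symm⟩
  · intro j j' hj hj'
    by_cases hjj : j = j'
    · subst hjj; exact Or.inl rfl
    obtain ⟨a, ha⟩ : ∃ a : Fin m → ℤ, ∀ i, A i j = 2 * a i :=
      ⟨fun i => A i j / 2, fun i => (Int.mul_ediv_cancel' (part1 j hj i)).symm⟩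
    obtain ⟨b, hb⟩ : ∃ b : Fin m → ℤ, ∀ i, A i j' = 2 * b i :=
      ⟨fun i => A i j' / 2, fun i => (Int.mul_ediv_cancel' (part1 j' hj' i)).symm⟩
    have haprim : IsPrimitiveVec a := by
      intro d hd
      by_contra hdu
      have hd2 : ∀ i, 2 * d ∣ A i j := fun i => by rw [ha i]; exact mul_dvd_mul_left 2 (hd i)
      have h2du : ¬ IsUnit (2 * d) := by
        intro h; rcases Int.isUnit_iff.mp h with h | h <;> omega
      rcases key j (2 * d) hd2 h2du with h | h <;>
      · have hd1 : d = 1 ∨ d = -1 := by omega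
        exact hdu (Int.isUnit_iff.mpr hd1)
    have hbprim : IsPrimitiveVec b := by
      intro d hd
      by_contra hdu
      have hd2 : ∀ i, 2 * d ∣ A i j' := fun i => by rw [hb i]; exact mul_dvd_mul_left 2 (hd i)
      have h2du : ¬ IsUnit (2 * d) := by
        intro h; rcases Int.isUnit_iff.mp h with h | h <;> omega
      rcases key j' (2 * d) hd2 h2du with h | h <;>
      · have hd1 : d = 1 ∨ d = -1 := by omega
        exact hdu (Int.isUnit_iff.mpr hd1)
    have hcj' : c j' ≠ 0 := by
      intro h0
      apply hnz j'
      have h1 : A.transpose j' = 0 := castLM_inj m (by simpa [c, castLM, funext_iff] using h0)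
      funext i
      exact congrFun h1 i
    by_cases hdep : LinearIndependent ℚ ![c j, c j']
    · exfalso
      have hrange : Set.range ![c j, c j'] = ({c j, c j'} : Set (Fin m → ℚ)) := by
        ext x; simp [Matrix.range_cons, Matrix.range_empty]; tauto
      have hliset : LinearIndependent ℚ ((↑) : ({c j, c j'} : Set (Fin m → ℚ)) → (Fin m → ℚ)) := by
        rw [← hrange]; exact (linearIndepOn_id_range_iff hdep.injective).mpr hdep
      obtain ⟨g, hginj, hcov, hdet⟩ := extraction A htop hcolinj {c j, c j'} (by
        rintro x (rfl | rfl)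
        exacts [⟨j, rfl⟩, ⟨j', rfl⟩]) hliset
      obtain ⟨k0, hk0⟩ := hcov (c j) (by simp)
      obtain ⟨k1, hk1⟩ := hcov (c j') (by simp)
      have hgk0 : g k0 = j := hcolinj hk0
      have hgk1 : g k1 = j' := hcolinj hk1
      have hk01 : k1 ≠ k0 := by
        rintro rfl; exact hjj (hgk0.symm.trans hgk1)
      obtain ⟨N, hN, hNe⟩ := det_col_factor (A.submatrix id g) k0 2
        (fun i => by
          have : A.submatrix id g i k0 = 2 * a i := by simp [Matrix.submatrix, hgk0, ha i]
          exact ⟨a i, this⟩)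
      obtain ⟨N2, hN2, -⟩ := det_col_factor N k1 2
        (fun i => by
          rw [hNe i k1 hk01]
          have : A.submatrix id g i k1 = 2 * b i := by simp [Matrix.submatrix, hgk1, hb i]
          exact ⟨b i, this⟩)
      have h4 : (4:ℤ) ∣ (A.submatrix id g).det := ⟨N2.det, by rw [hN, hN2]; ring⟩
      have h5 := hmod g
      have habs : (4:ℤ) ≤ |(A.submatrix id g).det| :=
        Int.le_of_dvd (abs_pos.mpr hdet) ((dvd_abs _ _).mpr h4)
      linarith
    · rw [linearIndependent_fin2] at hdep
      push_neg at hdep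
      simp only [Matrix.cons_val_one, Matrix.head_cons, Matrix.cons_val_zero] at hdep
      obtain ⟨q, hq⟩ := hdep hcj'
      have hab : ∀ i, (q.den : ℤ) * a i = q.num * b i := by
        intro i
        have h1 : ((A i j : ℚ)) = q * (A i j' : ℚ) := by
          have h0 := congrFun hq i
          simpa [c, castLM, Pi.smul_apply, smul_eq_mul] using h0.symm
        rw [ha i, hb i] at h1
        push_cast at h1
        have h2 : (q.den : ℚ) * (a i : ℚ) = (q.num : ℚ) * (b i : ℚ) := by
          have h3 : (a i : ℚ) = q * b i := by linarith
          calc (q.den : ℚ) * (a i : ℚ) = ((q.den : ℚ) * q) * b i := by rw [h3]; ring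
          _ = (q.num : ℚ) * b i := by rw [Rat.den_mul_eq_num]
        exact_mod_cast h2
      have hcop : IsCoprime ((q.den : ℤ)) q.num := by
        rw [Int.isCoprime_iff_gcd_eq_one]
        simpa [Int.gcd, Nat.coprime_comm] using q.reduced
      have hdenu : IsUnit ((q.den : ℤ)) :=
        hbprim _ (fun i => hcop.dvd_of_dvd_mul_left ⟨a i, (hab i).symm⟩)
      have hden1 : ((q.den : ℤ)) = 1 := by
        have hpos := q.pos
        rcases Int.isUnit_iff.mp hdenu with h | h
        · exact h
        · omega
      have hab' : ∀ i, a i = q.num * b i := fun i => by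
        have h2 := hab i; rw [hden1, one_mul] at h2; exact h2
      have hnumu : IsUnit q.num := haprim _ (fun i => ⟨b i, hab' i⟩)
      rcases Int.isUnit_iff.mp hnumu with h | h
      · left; funext i; rw [ha i, hb i, hab' i, h, one_mul]
      · right; funext i; rw [ha i, hb i, hab' i, h]; ring

end Main

theorem stmt0 {m n : ℕ} (A : Matrix (Fin m) (Fin n) ℤ)
    (hrank : A.rank = m) (hmod : DMod A 2) (hdiff : DiffCols A) :
    (∀ j : Fin n, ¬ IsPrimitiveVec (fun i => A i j) →
      ∃ a : Fin m → ℤ, (fun i => A i j) = fun i => 2 * a i) ∧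
    (∀ j j' : Fin n, ¬ IsPrimitiveVec (fun i => A i j) →
      ¬ IsPrimitiveVec (fun i => A i j') →
      (fun i => A i j) = (fun i => A i j') ∨
        (fun i => A i j) = (fun i => -A i j')) :=
  stmt0' A hrank hmod hdiff.1 hdiff.2
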